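/- Let n, N, τ be integers with 0 ≤ N ≤ n and n − N ≤ τ, and let (B_1, …, B_τ) be an exchangeable random vector with values in {0,1} such that Σ_{s=1}^{τ} B_s = n − N almost surely. For t ∈ {1, …, τ} define N_t := N + Σ_{s=t+1}^{τ} B_s. Then for every t ∈ {2, …, τ} and every bounded function f : ℤ → ℝ, almost surely E[ f(N_t + B_t) ∣ B_{t+1}, …, B_τ ] = ((t − n + N_t)/t) · f(N_t) + ((n − N_t)/t) · f(N_t + 1). In particular, since N_{t−1} = N_t + B_t, this gives the backward recursion used to compute the Snell envelope: E_t(s) = max( R_t(s), ((t − n + s)/t) E_{t−1}(s) + ((n − s)/t) E_{t−1}(s+1) ) pointwise over the support of N_t. -/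

import Mathlib

open MeasureTheory

/-- Backward one-step conditional expectation used for the Snell-envelope recursion:
for an exchangeable `{0,1}`-valued vector `(B_1,…,B_τ)` with `∑ B_s = n - N` a.s.
(indices 0-based: `B ⟨s⟩` is the paper's `B_{s+1}`), with `N_t = N + ∑_{s=t+1}^{τ} B_s`,
for every `t ∈ {2,…,τ}` and every bounded `f : ℤ → ℝ`, almost surely
`E[f(N_t + B_t) ∣ B_{t+1},…,B_τ] = ((t-n+N_t)/t) f(N_t) + ((n-N_t)/t) f(N_t+1)`. -/
theorem stmt_5 {Ω : Type*} [MeasureSpace Ω] [IsProbabilityMeasure (volume : Measure Ω)]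
    (n N τ : ℕ) (hN : N ≤ n) (hτ : n - N ≤ τ)
    (B : Fin τ → Ω → ℕ)
    (hBmeas : ∀ s, Measurable (B s))
    (hB01 : ∀ s ω, B s ω ≤ 1)
    (hexch : ∀ π : Equiv.Perm (Fin τ),
      Measure.map (fun ω => fun s => B (π s) ω) volume =
        Measure.map (fun ω => fun s => B s ω) volume)
    (hsum : ∀ᵐ ω ∂volume, ∑ s, B s ω = n - N)
    (Nt : ℕ → Ω → ℕ)
    (hNt : ∀ t ω, Nt t ω = N + ∑ s : Fin τ, (if t ≤ (s : ℕ) then B s ω else 0))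
    (t : ℕ) (ht2 : 2 ≤ t) (htτ : t ≤ τ)
    (f : ℤ → ℝ) (hf : ∃ Cb : ℝ, ∀ z : ℤ, |f z| ≤ Cb)
    (G : MeasurableSpace Ω)
    (hG : G = MeasurableSpace.comap
        (fun ω => fun s : Fin τ => if t ≤ (s : ℕ) then B s ω else 0) inferInstance) :
    (volume[(fun ω => f ((Nt t ω : ℤ) + (B ⟨t - 1, by omega⟩ ω : ℤ))) | G])
      =ᵐ[volume] fun ω =>
        (((t : ℝ) - (n : ℝ) + (Nt t ω : ℝ)) / (t : ℝ)) * f ((Nt t ω : ℤ)) +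
          (((n : ℝ) - (Nt t ω : ℝ)) / (t : ℝ)) * f ((Nt t ω : ℤ) + 1) := by
  classical
  obtain ⟨Cb, hCb⟩ := hf
  subst hG
  set i₀ : Fin τ := ⟨t - 1, by omega⟩ with hi₀
  set φ : Ω → Fin τ → ℕ := fun ω => fun s : Fin τ => if t ≤ (s : ℕ) then B s ω else 0
    with hφdef
  have hφm : Measurable φ := by
    apply measurable_pi_lambda
    intro s
    simp only [hφdef]
    by_cases h : t ≤ (s : ℕ)
    · simpa only [if_pos h] using hBmeas s
    · simpa only [if_neg h] using measurable_const
  have hm : MeasurableSpace.comap φ inferInstance ≤ (inferInstance : MeasurableSpace Ω) :=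
    hφm.comap_le
  have hfm : Measurable f := measurable_of_countable f
  have hNtfun : Nt t = fun ω => N + ∑ s : Fin τ, φ ω s := funext (hNt t)
  have hNtm : Measurable (Nt t) := by
    rw [hNtfun]
    exact measurable_const.add
      (Finset.measurable_sum _ fun s _ => (measurable_pi_apply s).comp hφm)
  have hcast : Measurable (fun k : ℕ => (k : ℤ)) := measurable_of_countable _
  have hforigm : Measurable (fun ω => f ((Nt t ω : ℤ) + (B i₀ ω : ℤ))) :=
    hfm.comp ((hcast.comp hNtm).add (hcast.comp (hBmeas i₀)))
  have hCb0 : 0 ≤ Cb := le_trans (abs_nonneg _) (hCb 0)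
  have hint : ∀ (h : Ω → ℝ) (C : ℝ), Measurable h → (∀ ω, |h ω| ≤ C) →
      Integrable h (volume : Measure Ω) := by
    intro h C hhm hhb
    exact ⟨hhm.aestronglyMeasurable,
      HasFiniteIntegral.of_bounded (C := C) (Filter.Eventually.of_forall fun ω => hhb ω)⟩
  have hfint : Integrable (fun ω => f ((Nt t ω : ℤ) + (B i₀ ω : ℤ))) (volume : Measure Ω) :=
    hint _ Cb hforigm fun ω => hCb _
  set g : Ω → ℝ := fun ω =>
      (((t : ℝ) - (n : ℝ) + (Nt t ω : ℝ)) / (t : ℝ)) * f ((Nt t ω : ℤ)) +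
        (((n : ℝ) - (Nt t ω : ℝ)) / (t : ℝ)) * f ((Nt t ω : ℤ) + 1) with hgdef
  have ht0 : (0:ℝ) < (t:ℝ) := by
    have : 0 < t := by omega
    exact_mod_cast this
  have hNtle : ∀ ω, Nt t ω ≤ N + τ := by
    intro ω
    rw [hNt]
    have h1 : ∑ s : Fin τ, (if t ≤ (s : ℕ) then B s ω else 0) ≤ ∑ _s : Fin τ, 1 :=
      Finset.sum_le_sum fun s _ => by
        by_cases h : t ≤ (s : ℕ) <;> simp [h, hB01 s ω]
    simp only [Finset.sum_const, Finset.card_univ, Fintype.card_fin, smul_eq_mul, mul_one] at h1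
    omega
  -- bound on g
  have haux : ∀ ω, |((t : ℝ) - (n : ℝ) + (Nt t ω : ℝ)) / (t : ℝ)| ≤ (t:ℝ) + n + N + τ := by
    intro ω
    have h1 : (Nt t ω : ℝ) ≤ (N:ℝ) + τ := by exact_mod_cast hNtle ω
    have h2 : (0:ℝ) ≤ (Nt t ω : ℝ) := Nat.cast_nonneg _
    rw [abs_div, abs_of_pos ht0]
    have h3 : |((t : ℝ) - (n : ℝ) + (Nt t ω : ℝ))| ≤ (t:ℝ) + n + N + τ := by
      rw [abs_le]
      constructor <;> nlinarith [Nat.cast_nonneg (α := ℝ) t, Nat.cast_nonneg (α := ℝ) n]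
    calc |((t : ℝ) - (n : ℝ) + (Nt t ω : ℝ))| / (t:ℝ) ≤ |((t : ℝ) - (n : ℝ) + (Nt t ω : ℝ))| := by
          apply div_le_self (abs_nonneg _)
          exact_mod_cast (by omega : 1 ≤ t)
      _ ≤ (t:ℝ) + n + N + τ := h3
  have haux2 : ∀ ω, |((n : ℝ) - (Nt t ω : ℝ)) / (t : ℝ)| ≤ (t:ℝ) + n + N + τ := by
    intro ω
    have h1 : (Nt t ω : ℝ) ≤ (N:ℝ) + τ := by exact_mod_cast hNtle ω
    have h2 : (0:ℝ) ≤ (Nt t ω : ℝ) := Nat.cast_nonneg _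
    rw [abs_div, abs_of_pos ht0]
    have h3 : |((n : ℝ) - (Nt t ω : ℝ))| ≤ (t:ℝ) + n + N + τ := by
      rw [abs_le]
      constructor <;> nlinarith [Nat.cast_nonneg (α := ℝ) t, Nat.cast_nonneg (α := ℝ) n]
    calc |((n : ℝ) - (Nt t ω : ℝ))| / (t:ℝ) ≤ |((n : ℝ) - (Nt t ω : ℝ))| := by
          apply div_le_self (abs_nonneg _)
          exact_mod_cast (by omega : 1 ≤ t)
      _ ≤ (t:ℝ) + n + N + τ := h3
  have hgbd : ∀ ω, |g ω| ≤ ((t:ℝ) + n + N + τ) * Cb + ((t:ℝ) + n + N + τ) * Cb := by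
    intro ω
    calc |g ω| ≤ |(((t : ℝ) - (n : ℝ) + (Nt t ω : ℝ)) / (t : ℝ)) * f ((Nt t ω : ℤ))| +
          |(((n : ℝ) - (Nt t ω : ℝ)) / (t : ℝ)) * f ((Nt t ω : ℤ) + 1)| := abs_add_le _ _
      _ ≤ ((t:ℝ) + n + N + τ) * Cb + ((t:ℝ) + n + N + τ) * Cb := by
          rw [abs_mul, abs_mul]
          exact add_le_add
            (mul_le_mul (haux ω) (hCb _) (abs_nonneg _) ((abs_nonneg _).trans (haux ω)))
            (mul_le_mul (haux2 ω) (hCb _) (abs_nonneg _) ((abs_nonneg _).trans (haux2 ω)))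
  have hgm : Measurable g := by
    apply Measurable.add <;> apply Measurable.mul
    · exact ((measurable_const.sub measurable_const).add
        ((measurable_of_countable (fun k : ℕ => (k:ℝ))).comp hNtm)).div measurable_const
    · exact hfm.comp (hcast.comp hNtm)
    · exact (measurable_const.sub
        ((measurable_of_countable (fun k : ℕ => (k:ℝ))).comp hNtm)).div measurable_const
    · exact hfm.comp ((hcast.comp hNtm).add measurable_const)
  have hgint : Integrable g (volume : Measure Ω) := hint _ _ hgm hgbd
  -- g is measurable w.r.t. the comap σ-algebra
  have hgG : Measurable[MeasurableSpace.comap φ inferInstance] g := by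
    have hΨ : Measurable (fun v : Fin τ → ℕ =>
        (((t : ℝ) - (n : ℝ) + ((N + ∑ s : Fin τ, v s : ℕ) : ℝ)) / (t : ℝ)) *
            f (((N + ∑ s : Fin τ, v s : ℕ) : ℤ)) +
          (((n : ℝ) - ((N + ∑ s : Fin τ, v s : ℕ) : ℝ)) / (t : ℝ)) *
            f (((N + ∑ s : Fin τ, v s : ℕ) : ℤ) + 1)) := measurable_of_countable _
    have hφG : Measurable[MeasurableSpace.comap φ inferInstance] φ :=
      Measurable.of_comap_le le_rfl
    have := hΨ.comp hφG
    convert this using 1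
    funext ω
    simp only [Function.comp_apply, hgdef, hNt t ω]
    rfl
  -- the filter set J
  set J : Finset (Fin τ) := Finset.univ.filter (fun j : Fin τ => (j:ℕ) < t) with hJdef
  have hJcard : J.card = t := by
    rw [hJdef, Finset.card_filter, Fin.sum_univ_eq_sum_range (fun k => if k < t then 1 else 0)]
    rw [Finset.range_eq_Ico, ← Finset.sum_Ico_consecutive _ (Nat.zero_le t) htτ]
    have h1 : ∀ k ∈ Finset.Ico 0 t, (if k < t then 1 else 0) = 1 := by
      intro k hk; simp at hk; simp [hk]
    have h2 : ∀ k ∈ Finset.Ico t τ, (if k < t then 1 else 0) = 0 := by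
      intro k hk; simp at hk; simp; omega
    rw [Finset.sum_congr rfl h1, Finset.sum_congr rfl h2]
    simp
  -- main set-integral identity
  have hg_eq : ∀ A : Set Ω, MeasurableSet[MeasurableSpace.comap φ inferInstance] A →
      ∫ x in A, g x = ∫ x in A, f ((Nt t x : ℤ) + (B i₀ x : ℤ)) := by
    intro A hA
    obtain ⟨S, hS, hSA⟩ := hA
    have hAmeas : MeasurableSet A := hm A ⟨S, hS, hSA⟩
    set ind : Ω → ℝ := Set.indicator A (fun _ => (1:ℝ)) with hinddef
    have hindm : Measurable ind := (measurable_const (a := (1:ℝ))).indicator hAmeas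
    have hind01 : ∀ ω, ind ω = 0 ∨ ind ω = 1 := by
      intro ω
      by_cases h : ω ∈ A <;> simp [hinddef, h]
    have hindabs : ∀ ω, |ind ω| ≤ 1 := by
      intro ω; rcases hind01 ω with h | h <;> simp [h]
    -- the test function on sequence space
    set H : (Fin τ → ℕ) → ℝ := fun v =>
      Set.indicator S (fun _ => (1:ℝ)) (fun s : Fin τ => if t ≤ (s : ℕ) then v s else 0) *
        f (((N + ∑ s : Fin τ, (if t ≤ (s : ℕ) then v s else 0) : ℕ) : ℤ) + (v i₀ : ℤ))
      with hHdef
    have hHm : Measurable H := measurable_of_countable H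
    -- evaluation on the plain vector
    have hHplain : ∀ ω, H (fun s => B s ω) = ind ω * f ((Nt t ω : ℤ) + (B i₀ ω : ℤ)) := by
      intro ω
      have h1 : (fun s : Fin τ => if t ≤ (s : ℕ) then B s ω else 0) = φ ω := rfl
      have h2 : Set.indicator S (fun _ => (1:ℝ)) (φ ω) = ind ω := by
        by_cases h : ω ∈ A
        · have : φ ω ∈ S := by rw [← hSA] at h; exact h
          simp [hinddef, h, this]
        · have : φ ω ∉ S := by rw [← hSA] at h; exact h
          simp [hinddef, h, this]
      simp only [hHdef, h1, h2, hNt t ω]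
    -- exchange step
    have hkey : ∀ j ∈ J,
        ∫ ω, ind ω * f ((Nt t ω : ℤ) + (B j ω : ℤ)) =
          ∫ ω, ind ω * f ((Nt t ω : ℤ) + (B i₀ ω : ℤ)) := by
      intro j hj
      have hjt : (j : ℕ) < t := by
        rw [hJdef] at hj; simpa using hj
      set π : Equiv.Perm (Fin τ) := Equiv.swap j i₀ with hπdef
      have hπfix : ∀ s : Fin τ, t ≤ (s : ℕ) → π s = s := by
        intro s hs
        apply Equiv.swap_apply_of_ne_of_ne
        · intro h; rw [h] at hs; omega
        · intro h; rw [h] at hs; simp only [hi₀] at hs; omega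
      have hπi₀ : π i₀ = j := Equiv.swap_apply_right j i₀
      have hHswap : ∀ ω, H (fun s => B (π s) ω) =
          ind ω * f ((Nt t ω : ℤ) + (B j ω : ℤ)) := by
        intro ω
        have h1 : (fun s : Fin τ => if t ≤ (s : ℕ) then B (π s) ω else 0) = φ ω := by
          funext s
          by_cases h : t ≤ (s : ℕ)
          · simp [h, hπfix s h, hφdef]
          · simp [h, hφdef]
        have h2 : Set.indicator S (fun _ => (1:ℝ)) (φ ω) = ind ω := by
          by_cases h : ω ∈ A
          · have : φ ω ∈ S := by rw [← hSA] at h; exact h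
            simp [hinddef, h, this]
          · have : φ ω ∉ S := by rw [← hSA] at h; exact h
            simp [hinddef, h, this]
        have h3 : ∑ s : Fin τ, (if t ≤ (s : ℕ) then B (π s) ω else 0) = ∑ s : Fin τ, φ ω s := by
          rw [show (fun s : Fin τ => if t ≤ (s : ℕ) then B (π s) ω else 0) = φ ω from h1]
        simp only [hHdef, h1, h2, hπi₀, hNt t ω]
        rfl
      have hmap := hexch π
      have hml : Measurable (fun ω => fun s : Fin τ => B (π s) ω) :=
        measurable_pi_lambda _ fun s => hBmeas (π s)
      have hmr : Measurable (fun ω => fun s : Fin τ => B s ω) :=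
        measurable_pi_lambda _ fun s => hBmeas s
      have e1 : ∫ ω, H (fun s => B (π s) ω) ∂(volume : Measure Ω) =
          ∫ v, H v ∂(Measure.map (fun ω => fun s => B (π s) ω) (volume : Measure Ω)) :=
        (integral_map hml.aemeasurable hHm.aestronglyMeasurable).symm
      have e2 : ∫ v, H v ∂(Measure.map (fun ω => fun s => B s ω) (volume : Measure Ω)) =
          ∫ ω, H (fun s => B s ω) ∂(volume : Measure Ω) :=
        integral_map hmr.aemeasurable hHm.aestronglyMeasurable
      calc ∫ ω, ind ω * f ((Nt t ω : ℤ) + (B j ω : ℤ))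
          = ∫ ω, H (fun s => B (π s) ω) := by
            congr 1; funext ω; rw [hHswap ω]
        _ = ∫ v, H v ∂(Measure.map (fun ω => fun s => B (π s) ω) (volume : Measure Ω)) := e1
        _ = ∫ v, H v ∂(Measure.map (fun ω => fun s => B s ω) (volume : Measure Ω)) := by
            rw [hmap]
        _ = ∫ ω, H (fun s => B s ω) := e2
        _ = ∫ ω, ind ω * f ((Nt t ω : ℤ) + (B i₀ ω : ℤ)) := by
            congr 1; funext ω; rw [hHplain ω]
    -- integrability of each summand
    have hintj : ∀ j : Fin τ, Integrable (fun ω => ind ω * f ((Nt t ω : ℤ) + (B j ω : ℤ)))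
        (volume : Measure Ω) := by
      intro j
      apply hint _ Cb
      · exact hindm.mul (hfm.comp ((hcast.comp hNtm).add (hcast.comp (hBmeas j))))
      · intro ω
        rw [abs_mul]
        calc |ind ω| * |f ((Nt t ω : ℤ) + (B j ω : ℤ))| ≤ 1 * Cb := by
              exact mul_le_mul (hindabs ω) (hCb _) (abs_nonneg _) zero_le_one
          _ = Cb := one_mul Cb
    -- a.e. pointwise sum identity
    have hae : ∀ᵐ ω ∂(volume : Measure Ω),
        ∑ j ∈ J, ind ω * f ((Nt t ω : ℤ) + (B j ω : ℤ)) = (t:ℝ) * (ind ω * g ω) := by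
      filter_upwards [hsum] with ω hω
      have hKsplit : (∑ j ∈ J, B j ω) +
          (∑ s ∈ Finset.univ.filter (fun s : Fin τ => ¬ (s:ℕ) < t), B s ω) = n - N := by
        rw [Finset.sum_filter_add_sum_filter_not]
        exact hω
      have htail : (∑ s ∈ Finset.univ.filter (fun s : Fin τ => ¬ (s:ℕ) < t), B s ω) =
          ∑ s : Fin τ, φ ω s := by
        rw [Finset.sum_filter]
        apply Finset.sum_congr rfl
        intro s _
        by_cases h : t ≤ (s : ℕ)
        · simp [h, Nat.not_lt.mpr h, hφdef]
        · simp [h, Nat.lt_of_not_le h, hφdef]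
      have hKNt : (∑ j ∈ J, B j ω) + Nt t ω = n := by
        have h1 := hKsplit
        rw [htail] at h1
        have h2 : Nt t ω = N + ∑ s : Fin τ, φ ω s := hNt t ω
        omega
      have hKr : ((∑ j ∈ J, B j ω : ℕ) : ℝ) = (n : ℝ) - (Nt t ω : ℝ) := by
        have := hKNt
        push_cast [← this]
        ring
      rcases hind01 ω with h0 | h1
      · simp [h0]
      · simp only [h1, one_mul, mul_one]
        have hterm : ∀ j ∈ J, f ((Nt t ω : ℤ) + (B j ω : ℤ)) =
            (1 - (B j ω : ℝ)) * f ((Nt t ω : ℤ)) + (B j ω : ℝ) * f ((Nt t ω : ℤ) + 1) := by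
          intro j _
          have hb := hB01 j ω
          interval_cases (B j ω) <;> simp
        rw [Finset.sum_congr rfl hterm, Finset.sum_add_distrib, ← Finset.sum_mul,
          ← Finset.sum_mul]
        have hs1 : ∑ j ∈ J, (1 - (B j ω : ℝ)) = (t:ℝ) - ((n:ℝ) - (Nt t ω : ℝ)) := by
          rw [Finset.sum_sub_distrib, Finset.sum_const, hJcard]
          have : ∑ j ∈ J, ((B j ω : ℝ)) = ((∑ j ∈ J, B j ω : ℕ) : ℝ) := by push_cast; ring
          rw [this, hKr]; simp
        have hs2 : ∑ j ∈ J, ((B j ω : ℝ)) = (n:ℝ) - (Nt t ω : ℝ) := by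
          have : ∑ j ∈ J, ((B j ω : ℝ)) = ((∑ j ∈ J, B j ω : ℕ) : ℝ) := by push_cast; ring
          rw [this, hKr]
        rw [hs1, hs2, hgdef]
        have htne : (t:ℝ) ≠ 0 := ne_of_gt ht0
        rw [mul_add, ← mul_assoc, ← mul_assoc, mul_div_cancel₀ _ htne, mul_div_cancel₀ _ htne]
        ring
    -- putting things together
    have hsum_int : ∑ j ∈ J, ∫ ω, ind ω * f ((Nt t ω : ℤ) + (B j ω : ℤ)) =
        ∫ ω, ∑ j ∈ J, ind ω * f ((Nt t ω : ℤ) + (B j ω : ℤ)) :=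
      (integral_finset_sum J fun j _ => hintj j).symm
    have hconst : ∑ j ∈ J, ∫ ω, ind ω * f ((Nt t ω : ℤ) + (B j ω : ℤ)) =
        (t:ℝ) * ∫ ω, ind ω * f ((Nt t ω : ℤ) + (B i₀ ω : ℤ)) := by
      rw [Finset.sum_congr rfl hkey, Finset.sum_const, hJcard, nsmul_eq_mul]
    have hgind_int : Integrable (fun ω => ind ω * g ω) (volume : Measure Ω) := by
      apply hint _ (((t:ℝ) + n + N + τ) * Cb + ((t:ℝ) + n + N + τ) * Cb)
      · exact hindm.mul hgm
      · intro ω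
        rw [abs_mul]
        calc |ind ω| * |g ω| ≤ 1 * (((t:ℝ) + n + N + τ) * Cb + ((t:ℝ) + n + N + τ) * Cb) := by
              apply mul_le_mul (hindabs ω) (hgbd ω) (abs_nonneg _) zero_le_one
          _ = _ := one_mul _
    have hmain : (t:ℝ) * ∫ ω, ind ω * f ((Nt t ω : ℤ) + (B i₀ ω : ℤ)) =
        (t:ℝ) * ∫ ω, ind ω * g ω := by
      rw [← hconst, hsum_int]
      rw [integral_congr_ae hae]
      rw [integral_const_mul]
    have hmain2 : ∫ ω, ind ω * f ((Nt t ω : ℤ) + (B i₀ ω : ℤ)) = ∫ ω, ind ω * g ω :=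
      mul_left_cancel₀ (ne_of_gt ht0) hmain
    -- translate to set integrals
    have hr1 : ∫ x in A, g x = ∫ ω, ind ω * g ω := by
      rw [← integral_indicator hAmeas]
      congr 1
      funext ω
      by_cases h : ω ∈ A <;> simp [hinddef, Set.indicator, h]
    have hr2 : ∫ x in A, f ((Nt t x : ℤ) + (B i₀ x : ℤ)) =
        ∫ ω, ind ω * f ((Nt t ω : ℤ) + (B i₀ ω : ℤ)) := by
      rw [← integral_indicator hAmeas]
      congr 1
      funext ω
      by_cases h : ω ∈ A <;> simp [hinddef, Set.indicator, h]
    rw [hr1, hr2, hmain2]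
  -- conclude via uniqueness of conditional expectation
  haveI : SigmaFinite ((volume : Measure Ω).trim hm) :=
    (isFiniteMeasure_trim hm).toSigmaFinite
  have := ae_eq_condExp_of_forall_setIntegral_eq (μ := (volume : Measure Ω)) hm hfint
    (fun s _ _ => hgint.integrableOn)
    (fun s hs _ => hg_eq s hs)
    (StronglyMeasurable.aestronglyMeasurable hgG.stronglyMeasurable)
  exact this.symm
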